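/- Let X be a Banach lattice and let x, y ∈ X satisfy x ≥ 0, y ≥ 0, x ≠ 0 and x ⊓ y = 0. Then there exists a positive continuous linear functional x* on X with ‖x*‖ = 1 such that x*(x) = ‖x‖ and x*(y) = 0. -/

import Mathlib

/-- If `x, y` are positive elements of a Banach lattice, `x ≠ 0` and
`x ⊓ y = 0`, then there is a norm-one positive functional `x*` with `x*(x) = ‖x‖` and
`x*(y) = 0`. -/
theorem stmt2 (X : Type*) [NormedAddCommGroup X] [Lattice X] [IsOrderedAddMonoid X]
    [HasSolidNorm X] [NormedSpace ℝ X]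
    [PosSMulStrictMono ℝ X] [PosSMulReflectLT ℝ X] [CompleteSpace X]
    (x y : X) (hx0 : 0 ≤ x) (hy0 : 0 ≤ y) (hx : x ≠ 0) (hxy : x ⊓ y = 0) :
    ∃ f : X →L[ℝ] ℝ, (∀ z : X, 0 ≤ z → 0 ≤ f z) ∧ ‖f‖ = 1 ∧
      f x = ‖x‖ ∧ f y = 0 := by
  classical
  -- positive scalar multiples of `y` are disjoint from `x`
  have hdisj : ∀ t : ℝ, 0 ≤ t → x ⊓ t • y = 0 := by
    intro t ht
    rcases le_or_gt t 1 with h1 | h1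
    · have hle : t • y ≤ y := by
        calc t • y ≤ 1 • y := smul_le_smul_of_nonneg_right h1 hy0
        _ = y := one_smul _ _
      refine le_antisymm ?_ (le_inf hx0 (smul_nonneg ht hy0))
      calc x ⊓ t • y ≤ x ⊓ y := inf_le_inf_left _ hle
      _ = 0 := hxy
    · have ht' : (0:ℝ) < t := lt_trans one_pos h1
      have hle : x ≤ t • x := by
        calc x = 1 • x := (one_smul _ _).symm
        _ ≤ t • x := smul_le_smul_of_nonneg_right h1.le hx0
      refine le_antisymm ?_ (le_inf hx0 (smul_nonneg ht hy0))
      calc x ⊓ t • y ≤ t • x ⊓ t • y := inf_le_inf_right _ hle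
      _ = t • (x ⊓ y) := ((OrderIso.smulRight ht').map_inf x y).symm
      _ = 0 := by rw [hxy, smul_zero]
  -- posPart of positive smul
  have hsmulpos : ∀ (c : ℝ), 0 < c → ∀ a : X, (c • a)⁺ = c • a⁺ := by
    intro c hc a
    have h := (OrderIso.smulRight hc).map_sup a 0
    simp only [OrderIso.smulRight_apply, smul_zero] at h
    rw [posPart_def, posPart_def, h]
  -- key lower bound
  have hA : ∀ t : ℝ, ‖x‖ ≤ ‖(x + t • y)⁺‖ := by
    intro t
    rcases le_or_gt 0 t with ht | ht
    · have h1 : x ≤ (x + t • y)⁺ :=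
        le_trans (le_add_of_nonneg_right (smul_nonneg ht hy0)) (le_posPart _)
      refine norm_le_norm_of_abs_le_abs ?_
      rw [abs_of_nonneg hx0, abs_of_nonneg (posPart_nonneg _)]
      exact h1
    · -- here `(x + t•y)⁺ = x`
      set v : X := (-t) • y with hv
      have hv0 : 0 ≤ v := smul_nonneg (neg_nonneg.mpr ht.le) hy0
      have hxv : x ⊓ v = 0 := hdisj (-t) (neg_nonneg.mpr ht.le)
      have hxtv : x + t • y = x - v := by
        rw [hv, neg_smul, sub_neg_eq_add]
      have hkey : (x - v)⁺ = x := by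
        have hsup : x ⊔ v = x + v := by
          have := inf_add_sup x v
          rwa [hxv, zero_add] at this
        have h2 : (x - v)⁺ + v = x + v := by
          rw [posPart_def, sup_add, sub_add_cancel, zero_add, hsup]
        exact add_right_cancel h2
      rw [hxtv, hkey]
  -- the sublinear functional
  set N : X → ℝ := fun z => ⨅ t : ℝ, ‖(z + t • y)⁺‖ with hN
  have hbdd : ∀ z : X, BddBelow (Set.range fun t : ℝ => ‖(z + t • y)⁺‖) := by
    intro z
    exact ⟨0, by rintro r ⟨t, rfl⟩; exact norm_nonneg _⟩
  have hNnonneg : ∀ z : X, 0 ≤ N z :=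
    fun z => le_ciInf fun t => norm_nonneg _
  have hNle : ∀ z : X, N z ≤ ‖z⁺‖ := by
    intro z
    have := ciInf_le (hbdd z) (0:ℝ)
    simpa using this
  have N_hom : ∀ c : ℝ, 0 < c → ∀ z : X, N (c • z) = c * N z := by
    intro c hc z
    have hrange : (Set.range fun t : ℝ => ‖(c • z + t • y)⁺‖) =
        Set.range fun s : ℝ => ‖(c • z + (c * s) • y)⁺‖ := by
      ext r
      constructor
      · rintro ⟨t, rfl⟩
        refine ⟨t / c, ?_⟩
        show ‖(c • z + (c * (t / c)) • y)⁺‖ = ‖(c • z + t • y)⁺‖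
        rw [mul_comm c (t / c), div_mul_cancel₀ t hc.ne']
      · rintro ⟨s, rfl⟩
        exact ⟨c * s, rfl⟩
    have hpt : ∀ s : ℝ, ‖(c • z + (c * s) • y)⁺‖ = c * ‖(z + s • y)⁺‖ := by
      intro s
      rw [mul_smul, ← smul_add, hsmulpos c hc, norm_smul, Real.norm_eq_abs,
        abs_of_pos hc]
    calc N (c • z) = ⨅ s : ℝ, ‖(c • z + (c * s) • y)⁺‖ := by
          rw [hN]; dsimp only
          rw [iInf, iInf, hrange]
    _ = ⨅ s : ℝ, c * ‖(z + s • y)⁺‖ := by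
          exact congrArg _ (funext hpt)
    _ = c * N z := (Real.mul_iInf_of_nonneg hc.le _).symm
  have N_add : ∀ z w : X, N (z + w) ≤ N z + N w := by
    intro z w
    refine le_ciInf_add_ciInf fun t s => ?_
    refine ciInf_le_of_le (hbdd _) (t + s) ?_
    have h1 : (z + w + (t + s) • y)⁺ ≤ (z + t • y)⁺ + (w + s • y)⁺ := by
      rw [posPart_def]
      refine sup_le ?_ (add_nonneg (posPart_nonneg _) (posPart_nonneg _))
      have : z + w + (t + s) • y = (z + t • y) + (w + s • y) := by
        rw [add_smul]; abel
      rw [this]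
      exact add_le_add (le_posPart _) (le_posPart _)
    calc ‖(z + w + (t + s) • y)⁺‖ ≤ ‖(z + t • y)⁺ + (w + s • y)⁺‖ := by
          refine norm_le_norm_of_abs_le_abs ?_
          rw [abs_of_nonneg (posPart_nonneg _),
            abs_of_nonneg (add_nonneg (posPart_nonneg _) (posPart_nonneg _))]
          exact h1
    _ ≤ ‖(z + t • y)⁺‖ + ‖(w + s • y)⁺‖ := norm_add_le _ _
  -- the partial linear map on span {x}
  set f : X →ₗ.[ℝ] ℝ := LinearPMap.mkSpanSingleton x (‖x‖ : ℝ) hx with hf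
  have hNx : ‖x‖ ≤ N x := le_ciInf hA
  have hfN : ∀ z : f.domain, f z ≤ N z := by
    rintro ⟨z, hz⟩
    have hz' : z ∈ Submodule.span ℝ ({x} : Set X) := hz
    rw [Submodule.mem_span_singleton] at hz'
    obtain ⟨c, rfl⟩ := hz'
    have happ : f ⟨c • x, hz⟩ = c • (‖x‖ : ℝ) :=
      LinearPMap.mkSpanSingleton'_apply x (‖x‖:ℝ) _ c _
    rw [happ]
    rcases le_or_gt c 0 with hc | hc
    · have : c • (‖x‖:ℝ) ≤ 0 := smul_nonpos_of_nonpos_of_nonneg hc (norm_nonneg x)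
      exact le_trans this (hNnonneg _)
    · rw [N_hom c hc]
      have := mul_le_mul_of_nonneg_left hNx hc.le
      simpa [smul_eq_mul] using this
  obtain ⟨g, hg1, hg2⟩ := exists_extension_of_le_sublinear f N N_hom N_add hfN
  -- properties of g
  have hpos : ∀ z : X, 0 ≤ z → 0 ≤ g z := by
    intro z hz
    have h1 : g (-z) ≤ N (-z) := hg2 (-z)
    have h2 : N (-z) ≤ ‖(-z)⁺‖ := hNle (-z)
    have h3 : (-z)⁺ = 0 := posPart_eq_zero.mpr (neg_nonpos.mpr hz)
    rw [h3, norm_zero] at h2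
    have := le_trans h1 h2
    rw [map_neg] at this
    linarith
  have hgx : g x = ‖x‖ := by
    have hmem : x ∈ f.domain := by
      rw [hf, LinearPMap.domain_mkSpanSingleton]
      exact Submodule.mem_span_singleton_self x
    have := hg1 ⟨x, hmem⟩
    rw [this]
    exact LinearPMap.mkSpanSingleton_apply ℝ ℝ hx (‖x‖:ℝ)
  have hgy : g y = 0 := by
    have h1 : g y ≤ N y := hg2 y
    have h2 : N y ≤ ‖(y + (-1 : ℝ) • y)⁺‖ := ciInf_le (hbdd y) (-1 : ℝ)
    have h3 : y + (-1 : ℝ) • y = 0 := by rw [neg_smul, one_smul, add_neg_cancel]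
    rw [h3] at h2
    simp only [posPart_def, sup_idem, le_refl, sup_of_le_right, norm_zero] at h2
    exact le_antisymm (le_trans h1 h2) (hpos y hy0)
  have hbound : ∀ z : X, ‖g z‖ ≤ 1 * ‖z‖ := by
    intro z
    rw [one_mul, Real.norm_eq_abs, abs_le]
    have hposle : ∀ w : X, g w ≤ ‖w‖ := by
      intro w
      refine le_trans (le_trans (hg2 w) (hNle w)) (norm_le_norm_of_abs_le_abs ?_)
      rw [abs_of_nonneg (posPart_nonneg _)]
      exact sup_le (le_abs_self w) (abs_nonneg w)
    constructor
    · have := hposle (-z)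
      rw [map_neg, norm_neg] at this
      linarith
    · exact hposle z
  set F : X →L[ℝ] ℝ := g.mkContinuous 1 hbound with hF
  have hFapp : ∀ z : X, F z = g z := fun z => rfl
  refine ⟨F, fun z hz => by rw [hFapp]; exact hpos z hz, ?_, by rw [hFapp, hgx], by rw [hFapp, hgy]⟩
  refine le_antisymm (g.mkContinuous_norm_le one_pos.le hbound) ?_
  have hxnorm : 0 < ‖x‖ := norm_pos_iff.mpr hx
  have := F.le_opNorm x
  rw [hFapp, hgx, Real.norm_eq_abs, abs_of_nonneg (norm_nonneg x)] at this
  nlinarith [this, hxnorm]
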